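/- Let S be a completely 0-simple topological inverse semigroup, so S is (algebraically) isomorphic to a Brandt λ-extension B_λ(G) of a maximal subgroup G. Then every non-zero H-class of S is a clopen subset of S, and is homeomorphic to the topological group G. -/

import Mathlib

set_option maxHeartbeats 1000000


/-- Multiplication of the Brandt `λ`-extension `B_λ(G) = (I × G × I) ∪ {0}`, with
`none` playing the role of the zero. -/
def brandtMul {I G : Type*} [Mul G] [DecidableEq I] :
    Option (I × G × I) → Option (I × G × I) → Option (I × G × I)
  | some (a, g, b), some (c, h, d) => if b = c then some (a, g * h, d) else none
  | _, _ => none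

/-- Inversion of the Brandt `λ`-extension: `(α,g,β)⁻¹ = (β,g⁻¹,α)` and `0⁻¹ = 0`. -/
def brandtInv {I G : Type*} [Inv G] : Option (I × G × I) → Option (I × G × I)
  | some (a, g, b) => some (b, g⁻¹, a)
  | none => none

/-- The non-zero `H`-class `(α, G, β)` of `B_λ(G)`. -/
def Hcl {I : Type*} (G : Type*) (α β : I) : Set (Option (I × G × I)) :=
  {x | ∃ g : G, x = some (α, g, β)}

/-- Extract the group coordinate (with junk value `1` at zero). -/
def brandtG {I G : Type*} [One G] : Option (I × G × I) → G
  | some (_, g, _) => g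
  | none => 1

/-- Let `S` be a completely `0`-simple topological inverse semigroup, so
that (up to isomorphism) `S = B_λ(G)` is a Brandt `λ`-extension of a maximal subgroup
`G` (the topology of the topological group `G` being the subspace topology of a
maximal subgroup).  Then every non-zero `H`-class `(α,G,β)` of `S` is clopen in `S`
and homeomorphic to the topological group `G`. -/
theorem stmt_6 {I G : Type*} [Group G] [DecidableEq I] [TopologicalSpace G]
    [IsTopologicalGroup G] [TopologicalSpace (Option (I × G × I))]
    [T2Space (Option (I × G × I))]
    (hmul : Continuous fun p : Option (I × G × I) × Option (I × G × I) =>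
      brandtMul p.1 p.2)
    (hinv : Continuous (brandtInv (I := I) (G := G)))
    (hmax : ∃ α₀ : I,
      Topology.IsEmbedding fun g : G => (some (α₀, g, α₀) : Option (I × G × I))) :
    ∀ α β : I, IsClopen (Hcl G α β) ∧ Nonempty (↥(Hcl G α β) ≃ₜ G) := by
  obtain ⟨α₀, hemb⟩ := hmax
  intro α β
  have hml : ∀ a : Option (I × G × I), Continuous fun x => brandtMul a x := fun a =>
    hmul.comp (continuous_const.prodMk continuous_id)
  have hmr : ∀ a : Option (I × G × I), Continuous fun x => brandtMul x a := fun a =>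
    hmul.comp (continuous_id.prodMk continuous_const)
  set f : Option (I × G × I) → Option (I × G × I) :=
    fun x => brandtMul (brandtMul (some (α, 1, α)) x) (some (β, 1, β)) with hfdef
  have hfc : Continuous f := (hmr _).comp (hml _)
  set q : Option (I × G × I) → Option (I × G × I) :=
    fun x => brandtMul x (brandtInv x) with hqdef
  have hqc : Continuous q := hmul.comp (continuous_id.prodMk hinv)
  -- openness
  have hopen : Hcl G α β = f ⁻¹' {(none : Option (I × G × I))}ᶜ := by
    ext x
    rcases x with _ | ⟨γ, g, δ⟩
    · simp [Hcl, hfdef, brandtMul]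
    · by_cases h1 : γ = α <;> by_cases h2 : δ = β <;>
        simp [Hcl, hfdef, brandtMul, h1, h2] <;> aesop
  have hclosed : Hcl G α β =
      {x | f x = x} ∩ q ⁻¹' {(some (α, 1, α) : Option (I × G × I))} := by
    ext x
    rcases x with _ | ⟨γ, g, δ⟩
    · simp [Hcl, hfdef, hqdef, brandtMul, brandtInv]
    · by_cases h1 : γ = α <;> by_cases h2 : δ = β <;>
        simp [Hcl, hfdef, hqdef, brandtMul, brandtInv, h1, h2]
  constructor
  · constructor
    · rw [hclosed]
      exact ((isClosed_eq hfc continuous_id).inter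
        (isClosed_singleton.preimage hqc))
    · rw [hopen]
      exact isClosed_singleton.isOpen_compl.preimage hfc
  · -- homeomorphism
    refine ⟨Homeomorph.mk
      ⟨fun x => brandtG x.1, fun g => ⟨some (α, g, β), g, rfl⟩, ?_, ?_⟩ ?_ ?_⟩
    · rintro ⟨x, g, rfl⟩; rfl
    · intro g; rfl
    · -- continuity of extraction
      rw [hemb.continuous_iff]
      have : ((fun g : G => (some (α₀, g, α₀) : Option (I × G × I))) ∘
          fun x : ↥(Hcl G α β) => brandtG x.1) =
          fun x : ↥(Hcl G α β) =>
            brandtMul (brandtMul (some (α₀, 1, α)) x.1) (some (β, 1, α₀)) := by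
        funext x
        rcases x with ⟨x, g, rfl⟩
        simp [brandtMul, brandtG]
      rw [this]
      exact ((hmr _).comp (hml _)).comp continuous_subtype_val
    · apply Continuous.subtype_mk
      have : (fun g : G => (some (α, g, β) : Option (I × G × I))) =
          fun g : G => brandtMul (brandtMul (some (α, 1, α₀))
            (some (α₀, g, α₀))) (some (α₀, 1, β)) := by
        funext g; simp [brandtMul]
      rw [this]
      exact ((hmr _).comp (hml _)).comp hemb.continuous
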